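/- Let Ω ⊆ ℝ³ be a helical domain (invariant under every H_θ) and let v = (v₁,v₂,v₃) : Ω → ℝ³ be a C¹ vector field. Then v is helical, i.e. v(H_θ(x)) = Q_θ v(x) for all θ ∈ ℝ and x ∈ Ω, if and only if ∇_ξ v = (v₂, −v₁, 0) on Ω, i.e. for each component i one has x₂ ∂_{x₁}v_i − x₁ ∂_{x₂}v_i + h ∂_{x₃}v_i equal to v₂, −v₁, 0 for i = 1, 2, 3 respectively. -/

import Mathlib

noncomputable section

open Real

/-- ℝ³ as functions `Fin 3 → ℝ`. -/
abbrev V3 := Fin 3 → ℝ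

/-- Partial derivative `∂_{x_i} f` of a scalar function on ℝ³. -/
def pd3 (i : Fin 3) (f : V3 → ℝ) (x : V3) : ℝ := fderiv ℝ f x (Pi.single i 1)

/-- The helical transformation `H_θ(x) = Q_θ x + (0,0,hθ)`. -/
def Hmap (h θ : ℝ) (x : V3) : V3 :=
  ![x 0 * Real.cos θ + x 1 * Real.sin θ,
    -(x 0) * Real.sin θ + x 1 * Real.cos θ,
    x 2 + h * θ]

/-- The rotation `Q_θ = diag(R_θ, 1)` acting on vectors of ℝ³. -/
def Qrot (θ : ℝ) (v : V3) : V3 :=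
  ![v 0 * Real.cos θ + v 1 * Real.sin θ,
    -(v 0) * Real.sin θ + v 1 * Real.cos θ,
    v 2]

/-- The directional derivative `∇_ξ f = x₂ ∂₁ f − x₁ ∂₂ f + h ∂₃ f`. -/
def gradXi (h : ℝ) (f : V3 → ℝ) (x : V3) : ℝ :=
  x 1 * pd3 0 f x - x 0 * pd3 1 f x + h * pd3 2 f x

-- auxiliary lemmas
lemma Hmap_zero (h : ℝ) (x : V3) : Hmap h 0 x = x := by
  funext i; fin_cases i <;> simp [Hmap]

lemma gradXi_eq (h : ℝ) (f : V3 → ℝ) (x : V3) :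
    gradXi h f x = fderiv ℝ f x ![x 1, -(x 0), h] := by
  have e : (![x 1, -(x 0), h] : V3)
      = x 1 • (Pi.single (0:Fin 3) (1:ℝ) : V3) + (-(x 0)) • (Pi.single (1:Fin 3) (1:ℝ) : V3) + h • (Pi.single (2:Fin 3) (1:ℝ) : V3) := by
    funext i; fin_cases i <;> simp
  rw [e]
  simp only [map_add, map_smul, smul_eq_mul, gradXi, pd3]
  ring

lemma hasDerivAt_Hmap (h : ℝ) (x : V3) (θ : ℝ) :
    HasDerivAt (fun t => Hmap h t x) ![(Hmap h θ x) 1, -((Hmap h θ x) 0), h] θ := by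
  rw [hasDerivAt_pi]
  intro i
  fin_cases i
  · have h1 : HasDerivAt (fun t => x 0 * Real.cos t + x 1 * Real.sin t)
        (x 0 * (-Real.sin θ) + x 1 * Real.cos θ) θ :=
      ((Real.hasDerivAt_cos θ).const_mul (x 0)).add ((Real.hasDerivAt_sin θ).const_mul (x 1))
    show HasDerivAt (fun t => Hmap h t x 0) (Hmap h θ x 1) θ
    convert h1 using 1
    simp [Hmap]
    simp [Hmap]
  · have h1 : HasDerivAt (fun t => -(x 0) * Real.sin t + x 1 * Real.cos t)
        (-(x 0) * Real.cos θ + x 1 * (-Real.sin θ)) θ :=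
      ((Real.hasDerivAt_sin θ).const_mul (-(x 0))).add ((Real.hasDerivAt_cos θ).const_mul (x 1))
    show HasDerivAt (fun t => Hmap h t x 1) (-(Hmap h θ x 0)) θ
    convert h1 using 1
    simp [Hmap]
    simp [Hmap]; ring
  · have h1 : HasDerivAt (fun t => x 2 + h * t) h θ := by
      simpa using ((hasDerivAt_id θ).const_mul h).const_add (x 2)
    show HasDerivAt (fun t => Hmap h t x 2) h θ
    convert h1 using 1
    funext t
    simp [Hmap]

lemma hasDerivAt_comp_Hmap (h : ℝ) (x : V3) (θ : ℝ) (f : V3 → ℝ)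
    (hf : DifferentiableAt ℝ f (Hmap h θ x)) :
    HasDerivAt (fun t => f (Hmap h t x)) (gradXi h f (Hmap h θ x)) θ := by
  rw [gradXi_eq]
  exact hf.hasFDerivAt.comp_hasDerivAt θ (hasDerivAt_Hmap h x θ)

/-- A C¹ vector field on a helical domain `Ω` is helical iff `∇_ξ v = (v₂, −v₁, 0)` on `Ω`. -/
theorem helical_field_iff (h : ℝ) (hh : 0 < h) (Ω : Set V3) (hΩopen : IsOpen Ω)
    (hΩ : ∀ θ : ℝ, Hmap h θ '' Ω = Ω)
    (v : V3 → V3) (hv : ∀ i : Fin 3, ContDiffOn ℝ 1 (fun x => v x i) Ω) :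
    (∀ θ : ℝ, ∀ x ∈ Ω, v (Hmap h θ x) = Qrot θ (v x)) ↔
      (∀ x ∈ Ω,
        gradXi h (fun y => v y 0) x = v x 1 ∧
        gradXi h (fun y => v y 1) x = -(v x 0) ∧
        gradXi h (fun y => v y 2) x = 0) := by
  have hdiff : ∀ (i : Fin 3) (y : V3), y ∈ Ω → DifferentiableAt ℝ (fun z => v z i) y :=
    fun i y hy => ((hv i).differentiableOn one_ne_zero).differentiableAt (hΩopen.mem_nhds hy)
  constructor
  · intro hyp x hx
    have key : ∀ i : Fin 3, HasDerivAt (fun t => v (Hmap h t x) i)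
        (gradXi h (fun z => v z i) x) 0 := by
      intro i
      have := hasDerivAt_comp_Hmap h x 0 (fun z => v z i)
        (by rw [Hmap_zero]; exact hdiff i x hx)
      rwa [Hmap_zero] at this
    refine ⟨?_, ?_, ?_⟩
    · have h1 : HasDerivAt (fun t => v x 0 * Real.cos t + v x 1 * Real.sin t) (v x 1) 0 := by
        have := ((Real.hasDerivAt_cos 0).const_mul (v x 0)).add
          ((Real.hasDerivAt_sin 0).const_mul (v x 1))
        simpa [Pi.add_def] using this
      have e : (fun t => v (Hmap h t x) 0) = fun t => v x 0 * Real.cos t + v x 1 * Real.sin t := by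
        funext t; rw [hyp t x hx]; simp [Qrot]
      exact (key 0).unique (e ▸ h1)
    · have h1 : HasDerivAt (fun t => -(v x 0) * Real.sin t + v x 1 * Real.cos t) (-(v x 0)) 0 := by
        have := ((Real.hasDerivAt_sin 0).const_mul (-(v x 0))).add
          ((Real.hasDerivAt_cos 0).const_mul (v x 1))
        simpa [Pi.add_def] using this
      have e : (fun t => v (Hmap h t x) 1) = fun t => -(v x 0) * Real.sin t + v x 1 * Real.cos t := by
        funext t; rw [hyp t x hx]; simp [Qrot]
      exact (key 1).unique (e ▸ h1)
    · have h1 : HasDerivAt (fun _ : ℝ => v x 2) 0 0 := hasDerivAt_const 0 (v x 2)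
      have e : (fun t => v (Hmap h t x) 2) = fun _ : ℝ => v x 2 := by
        funext t; rw [hyp t x hx]; simp [Qrot]
      exact (key 2).unique (e ▸ h1)
  · intro hyp θ x hx
    have hmem : ∀ t : ℝ, Hmap h t x ∈ Ω := fun t => by
      rw [← hΩ t]; exact Set.mem_image_of_mem _ hx
    have d : ∀ (i : Fin 3) (t : ℝ), HasDerivAt (fun s => v (Hmap h s x) i)
        (gradXi h (fun z => v z i) (Hmap h t x)) t :=
      fun i t => hasDerivAt_comp_Hmap h x t _ (hdiff i _ (hmem t))
    have d0 : ∀ t, HasDerivAt (fun s => v (Hmap h s x) 0) (v (Hmap h t x) 1) t := fun t => by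
      have := d 0 t; rwa [(hyp _ (hmem t)).1] at this
    have d1 : ∀ t, HasDerivAt (fun s => v (Hmap h s x) 1) (-(v (Hmap h t x) 0)) t := fun t => by
      have := d 1 t; rwa [(hyp _ (hmem t)).2.1] at this
    have d2 : ∀ t, HasDerivAt (fun s => v (Hmap h s x) 2) 0 t := fun t => by
      have := d 2 t; rwa [(hyp _ (hmem t)).2.2] at this
    have hg0 : ∀ t, HasDerivAt
        (fun s => v (Hmap h s x) 0 * Real.cos s - v (Hmap h s x) 1 * Real.sin s) 0 t := by
      intro t
      have := ((d0 t).mul (Real.hasDerivAt_cos t)).sub ((d1 t).mul (Real.hasDerivAt_sin t))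
      exact this.congr_deriv (by ring)
    have hg1 : ∀ t, HasDerivAt
        (fun s => v (Hmap h s x) 0 * Real.sin s + v (Hmap h s x) 1 * Real.cos s) 0 t := by
      intro t
      have := ((d0 t).mul (Real.hasDerivAt_sin t)).add ((d1 t).mul (Real.hasDerivAt_cos t))
      exact this.congr_deriv (by ring)
    have c0 := is_const_of_deriv_eq_zero (f := fun s => v (Hmap h s x) 0 * Real.cos s - v (Hmap h s x) 1 * Real.sin s)
      (fun s => (hg0 s).differentiableAt) (fun s => (hg0 s).deriv) θ 0
    have c1 := is_const_of_deriv_eq_zero (f := fun s => v (Hmap h s x) 0 * Real.sin s + v (Hmap h s x) 1 * Real.cos s)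
      (fun s => (hg1 s).differentiableAt) (fun s => (hg1 s).deriv) θ 0
    have c2 := is_const_of_deriv_eq_zero (f := fun s => v (Hmap h s x) 2)
      (fun s => (d2 s).differentiableAt) (fun s => (d2 s).deriv) θ 0
    simp only [Hmap_zero, Real.cos_zero, Real.sin_zero, mul_one, mul_zero, sub_zero, zero_add] at c0 c1 c2
    funext i
    fin_cases i
    · show v (Hmap h θ x) 0 = Qrot θ (v x) 0
      simp only [Qrot, Matrix.cons_val_zero]
      linear_combination Real.cos θ * c0 + Real.sin θ * c1
        - v (Hmap h θ x) 0 * (Real.sin_sq_add_cos_sq θ)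
    · show v (Hmap h θ x) 1 = Qrot θ (v x) 1
      simp only [Qrot, Matrix.cons_val_one, Matrix.head_cons, Matrix.cons_val_zero]
      linear_combination (-Real.sin θ) * c0 + Real.cos θ * c1
        - v (Hmap h θ x) 1 * (Real.sin_sq_add_cos_sq θ)
    · show v (Hmap h θ x) 2 = Qrot θ (v x) 2
      simpa [Qrot] using c2
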